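/- For all real numbers ν, b with 0 < ν < 1 and 0 < b < 1, one has (1/(2π)) · ∫_{−π}^{π} |1 − ν − e^{iω}|² / |1 − b − e^{iω}|² dω = (1 + (1 − ν)²)/(b(2 − b)) − 2(1 − ν)(1 − b)/(b(2 − b)). -/

import Mathlib

open MeasureTheory Real

lemma poisson_integral (β : ℝ) (h0 : 0 < β) (h1 : β < 1) :
    ∫ x in (-π)..π, (1 + β ^ 2 - 2 * β * Real.cos x)⁻¹ = 2 * π / (1 - β ^ 2) := by
  have hβsq : 1 - β ^ 2 > 0 := by nlinarith
  have hD1 : ∀ x : ℝ, 0 < 1 - β * Real.cos x := by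
    intro x
    nlinarith [Real.cos_le_one x, Real.neg_one_le_cos x]
  have hD : ∀ x : ℝ, 0 < 1 + β ^ 2 - 2 * β * Real.cos x := by
    intro x
    nlinarith [Real.cos_le_one x, Real.neg_one_le_cos x]
  set H : ℝ → ℝ := fun x => (x + 2 * Real.arctan (β * Real.sin x / (1 - β * Real.cos x))) / (1 - β ^ 2) with hH
  have hderiv : ∀ x : ℝ, HasDerivAt H ((1 + β ^ 2 - 2 * β * Real.cos x)⁻¹) x := by
    intro x
    have h1x := hD1 x
    have hs := Real.sin_sq_add_cos_sq x
    have hu : HasDerivAt (fun x => β * Real.sin x / (1 - β * Real.cos x))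
        ((β * Real.cos x * (1 - β * Real.cos x) - β * Real.sin x * (β * Real.sin x)) /
          (1 - β * Real.cos x) ^ 2) x := by
      exact (((Real.hasDerivAt_sin x).const_mul β).div
        (((Real.hasDerivAt_cos x).const_mul β).const_sub 1) h1x.ne').congr_deriv (by ring)
    have ha := hu.arctan
    have hsum := ((hasDerivAt_id x).add (ha.const_mul 2)).div_const (1 - β ^ 2)
    refine hsum.congr_deriv ?_
    have e1 : 1 + (β * Real.sin x / (1 - β * Real.cos x)) ^ 2
        = (1 + β ^ 2 - 2 * β * Real.cos x) / (1 - β * Real.cos x) ^ 2 := by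
      field_simp
      linear_combination β ^ 2 * hs
    have e2 : β * Real.cos x * (1 - β * Real.cos x) - β * Real.sin x * (β * Real.sin x)
        = β * Real.cos x - β ^ 2 := by linear_combination (-β ^ 2) * hs
    rw [e1, e2]
    field_simp [(hD x).ne', h1x.ne', hβsq.ne']
    ring
  have hcont : Continuous fun x : ℝ => (1 + β ^ 2 - 2 * β * Real.cos x)⁻¹ :=
    Continuous.inv₀ (by continuity) (fun x => (hD x).ne')
  rw [intervalIntegral.integral_eq_sub_of_hasDerivAt
    (f := H) (fun x _ => hderiv x) (hcont.intervalIntegrable _ _)]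
  simp only [hH, Real.sin_pi, Real.sin_neg, Real.cos_neg, Real.cos_pi, neg_zero, zero_div,
    mul_zero, zero_mul, Real.arctan_zero]
  ring

lemma norm_helper (a ω : ℝ) :
    ‖(1 : ℂ) - (a : ℂ) - Complex.exp (Complex.I * (ω : ℂ))‖ ^ 2
      = 1 + (1 - a) ^ 2 - 2 * (1 - a) * Real.cos ω := by
  have hs := Real.sin_sq_add_cos_sq ω
  simp only [Complex.sq_norm, Complex.normSq_apply, Complex.sub_re,
    Complex.sub_im, Complex.one_re, Complex.one_im, Complex.ofReal_re, Complex.ofReal_im,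
    Complex.exp_re, Complex.exp_im, Complex.mul_re, Complex.mul_im, Complex.I_re, Complex.I_im,
    mul_zero, mul_one, zero_mul, sub_zero, zero_sub, zero_add, add_zero, Real.exp_zero, one_mul]
  nlinarith [hs]

theorem integral_sq_ratio_eval (ν b : ℝ) (hν0 : 0 < ν) (hν1 : ν < 1)
    (hb0 : 0 < b) (hb1 : b < 1) :
    (1 / (2 * π)) *
        (∫ ω in Set.Icc (-π) π,
          ‖(1 : ℂ) - (ν : ℂ) - Complex.exp (Complex.I * (ω : ℂ))‖ ^ 2 /
            ‖(1 : ℂ) - (b : ℂ) - Complex.exp (Complex.I * (ω : ℂ))‖ ^ 2)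
      = (1 + (1 - ν) ^ 2) / (b * (2 - b)) - 2 * (1 - ν) * (1 - b) / (b * (2 - b)) := by
  set α := 1 - ν with hα
  set β := 1 - b with hβ
  have hβ0 : 0 < β := by simp [hβ]; linarith
  have hβ1 : β < 1 := by simp [hβ]; linarith
  have hβsq : 0 < 1 - β ^ 2 := by nlinarith
  have hD : ∀ x : ℝ, 0 < 1 + β ^ 2 - 2 * β * Real.cos x := by
    intro x
    nlinarith [Real.cos_le_one x, Real.neg_one_le_cos x]
  set K : ℝ := 1 + α ^ 2 - α * (1 + β ^ 2) / β with hK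
  -- rewrite integrand
  have hfun : ∀ ω : ℝ,
      ‖(1 : ℂ) - (ν : ℂ) - Complex.exp (Complex.I * (ω : ℂ))‖ ^ 2 /
          ‖(1 : ℂ) - (b : ℂ) - Complex.exp (Complex.I * (ω : ℂ))‖ ^ 2
        = α / β + K * (1 + β ^ 2 - 2 * β * Real.cos ω)⁻¹ := by
    intro ω
    rw [norm_helper ν ω, norm_helper b ω, ← hα, ← hβ]
    rw [div_eq_iff (hD ω).ne'] at *
    rw [add_mul, mul_assoc K, inv_mul_cancel₀ (hD ω).ne', mul_one, hK]
    field_simp [hK, hβ0.ne', (hD ω).ne']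
    ring
  have hIcc : (∫ ω in Set.Icc (-π) π,
      ‖(1 : ℂ) - (ν : ℂ) - Complex.exp (Complex.I * (ω : ℂ))‖ ^ 2 /
        ‖(1 : ℂ) - (b : ℂ) - Complex.exp (Complex.I * (ω : ℂ))‖ ^ 2)
      = ∫ ω in (-π)..π, (α / β + K * (1 + β ^ 2 - 2 * β * Real.cos ω)⁻¹) := by
    rw [MeasureTheory.integral_Icc_eq_integral_Ioc,
      ← intervalIntegral.integral_of_le (by linarith [Real.pi_pos] : -π ≤ π)]
    exact intervalIntegral.integral_congr (fun ω _ => hfun ω)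
  rw [hIcc]
  have hcont : Continuous fun x : ℝ => (1 + β ^ 2 - 2 * β * Real.cos x)⁻¹ :=
    Continuous.inv₀ (by continuity) (fun x => (hD x).ne')
  rw [intervalIntegral.integral_add (intervalIntegrable_const)
      (((hcont.intervalIntegrable _ _).const_mul K)),
    intervalIntegral.integral_const, intervalIntegral.integral_const_mul,
    poisson_integral β hβ0 hβ1]
  have h2 : 1 - β ^ 2 = b * (2 - b) := by rw [hβ]; ring
  have hπ := Real.pi_pos
  rw [h2] at *
  simp only [smul_eq_mul, hK, hα, hβ]
  have hb2 : (2:ℝ) - b ≠ 0 := by linarith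
  have hb3 : (1:ℝ) - b ≠ 0 := by linarith
  field_simp [hπ.ne', hb0.ne', hb2, hb3]
  ring
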